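/- If a square-free word Q contains two almost-square factors starting at the same position with lengths a < a' satisfying a' - a ≥ 4, then a' > (5/4)·a. (Consequently, writing the increasing sequence of lengths of almost-square prefixes at a fixed position as a₁ < a₂ < …, one has a_{i+2} ≥ (5/4)·a_i for all i.) -/

import Mathlib

/-- `E` is an extension of `W`: `W` with one letter inserted at some position. -/
def Extends {A : Type*} (W E : List A) : Prop :=
  ∃ (W₁ W₂ : List A) (x : A), W = W₁ ++ W₂ ∧ E = W₁ ++ x :: W₂

/-- `WW'` is an almost-square: `W'` is an extension of `W`, or `W'` is obtained
from `W` by deleting one letter (equivalently, `W` is an extension of `W'`). -/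
def AlmostSq {A : Type*} (W W' : List A) : Prop :=
  Extends W W' ∨ Extends W' W

/-- `U` contains a square (a nonempty factor of the form `X ++ X`). -/
def HasSquare {A : Type*} (U : List A) : Prop :=
  ∃ X : List A, X ≠ [] ∧ X ++ X <:+: U

def SquareFree {A : Type*} (U : List A) : Prop := ¬ HasSquare U

/-- `F` realizes the pattern `X Y₁ X Y₂ X ⋯ X Y_t X` (with `2*t+1` nonempty blocks,
all odd-indexed blocks equal to `X`). -/
def RealizesPat {A : Type*} (t : ℕ) (F : List A) : Prop :=
  ∃ (X : List A) (Y : Fin t → List A), X ≠ [] ∧ (∀ i, Y i ≠ []) ∧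
    F = X ++ (List.ofFn (fun i => Y i ++ X)).flatten

/-- `W` contains the pattern `X Y₁ X ⋯ X Y_t X`. -/
def ContainsPat {A : Type*} (t : ℕ) (W : List A) : Prop :=
  ∃ F : List A, F <:+: W ∧ RealizesPat t F

/-- `W` is extremal `X Y₁ X ⋯ X Y_t X`-avoiding over the alphabet `A`. -/
def ExtremalPat {A : Type*} (t : ℕ) (W : List A) : Prop :=
  ¬ ContainsPat t W ∧ ∀ E : List A, Extends W E → ContainsPat t E

/-- `W` is extremal square-free over the alphabet `A`. -/
def ExtremalSF {A : Type*} (W : List A) : Prop :=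
  SquareFree W ∧ ∀ E : List A, Extends W E → HasSquare E

section Aux

variable {A : Type*}

lemma hasSquare_of_period' (P : List A) (x : A) (j d : ℕ) (hd : 0 < d)
    (hrel : ∀ t, j ≤ t → t < j + d → P.getD (t + d) x = P.getD t x ∧ t + d < P.length) :
    HasSquare P := by
  have hlen : j + 2 * d ≤ P.length := by
    have := (hrel (j + d - 1) (by omega) (by omega)).2
    omega
  have hTeq : (P.drop j).take d = (P.drop (j + d)).take d := by
    apply List.ext_getElem
    · simp; omega
    · intro i h₁ h₂
      have hi : i < d := by simp at h₁; omega
      rw [List.getElem_take, List.getElem_take, List.getElem_drop, List.getElem_drop]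
      have h3 : j + i < P.length := by omega
      have := (hrel (j + i) (by omega) (by omega)).1
      rw [List.getD_eq_getElem P x (by omega : j + i + d < P.length),
        List.getD_eq_getElem P x h3] at this
      rw [← this]
      congr 1
      omega
  refine ⟨(P.drop j).take d, ?_, ?_⟩
  · have h6 : ((P.drop j).take d).length = d := by simp; omega
    intro h; rw [h] at h6; simp at h6; omega
  · have h5 : (P.drop j).take d ++ (P.drop j).take d = (P.drop j).take (d + d) := by
      rw [List.take_add, List.drop_drop]
      rw [← hTeq]
    rw [h5]
    exact ((List.take_prefix _ _).isInfix).trans ((List.drop_suffix _ _).isInfix)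

lemma hasSquare_abstract' (P : List A) (x : A) (s L c₁ c₂ d₁ d₂ d₃ : ℕ)
    (hc : c₁ ≤ c₂) (h1 : 0 < d₁) (h2 : 0 < d₂) (h3 : 0 < d₃)
    (hL : d₁ + d₂ + d₃ ≤ L)
    (hrel : ∀ j, s ≤ j → j < s + L → j ≠ c₁ → j ≠ c₂ →
      ((j < c₁ → P.getD (j + d₁) x = P.getD j x ∧ j + d₁ < P.length) ∧
       (c₁ < j → j < c₂ → P.getD (j + d₂) x = P.getD j x ∧ j + d₂ < P.length) ∧
       (c₂ < j → P.getD (j + d₃) x = P.getD j x ∧ j + d₃ < P.length))) :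
    HasSquare P := by
  by_cases hA : s + d₁ ≤ min c₁ (s + L)
  · refine hasSquare_of_period' P x s d₁ h1 (fun t ht1 ht2 => ?_)
    exact (hrel t ht1 (by omega) (by omega) (by omega)).1 (by omega)
  · by_cases hB : max s (c₁ + 1) + d₂ ≤ min c₂ (s + L)
    · refine hasSquare_of_period' P x (max s (c₁ + 1)) d₂ h2 (fun t ht1 ht2 => ?_)
      exact (hrel t (by omega) (by omega) (by omega) (by omega)).2.1 (by omega) (by omega)
    · refine hasSquare_of_period' P x (max s (c₂ + 1)) d₃ h3 (fun t ht1 ht2 => ?_)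
      exact (hrel t (by omega) (by omega) (by omega) (by omega)).2.2 (by omega)

lemma rel_ins (P U₁ U₂ T : List A) (y x : A)
    (hP : P = (U₁ ++ U₂) ++ ((U₁ ++ y :: U₂) ++ T)) :
    (∀ i, i < U₁.length →
      P.getD (U₁.length + U₂.length + i) x = P.getD i x) ∧
    (∀ i, U₁.length ≤ i → i < U₁.length + U₂.length →
      P.getD (U₁.length + U₂.length + 1 + i) x = P.getD i x) := by
  subst hP
  constructor
  · intro i hi
    rw [List.getD_append _ _ _ i (by simp; omega),
        List.getD_append _ _ _ i (by omega),
        List.getD_append_right _ _ _ _ (by simp),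
        show U₁.length + U₂.length + i - (U₁ ++ U₂).length = i by simp,
        List.getD_append _ _ _ i (by simp; omega),
        List.getD_append _ _ _ i (by omega)]
  · intro i h1 h2
    rw [List.getD_append _ _ _ i (by simp; omega),
        List.getD_append_right _ _ _ i (by omega),
        List.getD_append_right _ _ _ _ (by simp; omega),
        show U₁.length + U₂.length + 1 + i - (U₁ ++ U₂).length = i + 1 by simp; omega,
        List.getD_append _ _ _ (i+1) (by simp; omega),
        List.getD_append_right _ _ _ (i+1) (by omega),
        show i + 1 - U₁.length = (i - U₁.length) + 1 by omega,
        List.getD_cons_succ]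

lemma rel_del (P U₁ U₂ T : List A) (y x : A)
    (hP : P = (U₁ ++ y :: U₂) ++ ((U₁ ++ U₂) ++ T)) :
    (∀ i, i < U₁.length →
      P.getD (U₁.length + 1 + U₂.length + i) x = P.getD i x) ∧
    (∀ i, U₁.length + 1 ≤ i → i < U₁.length + 1 + U₂.length →
      P.getD (U₁.length + U₂.length + i) x = P.getD i x) := by
  subst hP
  constructor
  · intro i hi
    rw [List.getD_append _ _ _ i (by simp; omega),
        List.getD_append _ _ _ i (by omega),
        List.getD_append_right _ _ _ _ (by simp; omega),
        show U₁.length + 1 + U₂.length + i - (U₁ ++ y :: U₂).length = i by simp; omega,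
        List.getD_append _ _ _ i (by simp; omega),
        List.getD_append _ _ _ i (by omega)]
  · intro i h1 h2
    rw [List.getD_append _ _ _ i (by simp; omega),
        List.getD_append_right _ _ _ i (by omega),
        show i - U₁.length = (i - U₁.length - 1) + 1 by omega,
        List.getD_cons_succ,
        List.getD_append_right _ _ _ _ (by simp; omega),
        show U₁.length + U₂.length + i - (U₁ ++ y :: U₂).length = i - 1 by simp; omega,
        List.getD_append _ _ _ (i-1) (by simp; omega),
        List.getD_append_right _ _ _ (i-1) (by omega),
        show i - 1 - U₁.length = i - U₁.length - 1 by omega]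

lemma engine (P : List A) (x : A) (n m p q L wsh₂ xsh₂ : ℕ)
    (hp : p ≤ n) (hq : q ≤ m)
    (hw : n - 1 ≤ wsh₂) (hw' : wsh₂ ≤ n + 1)
    (h1 : n < m) (h2 : wsh₂ < m) (h3 : n < xsh₂) (h4 : wsh₂ < xsh₂)
    (hLm : L ≤ m) (hL2 : n + L ≤ wsh₂ + m)
    (hsum1 : (m - n) + (m - wsh₂) + (xsh₂ - wsh₂) ≤ L)
    (hsum2 : (m - n) + (xsh₂ - n) + (xsh₂ - wsh₂) ≤ L)
    (hb1 : m + q ≤ P.length) (hb2 : xsh₂ + m ≤ P.length)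
    (hx1 : ∀ i, i < q → P.getD (m + i) x = P.getD i x)
    (hx2 : ∀ i, q < i → i < m → P.getD (xsh₂ + i) x = P.getD i x)
    (hw1 : ∀ j, n ≤ j → j < n + p → P.getD j x = P.getD (j - n) x)
    (hw2 : ∀ j, n + p < j → j < n + L → P.getD j x = P.getD (j - wsh₂) x) :
    HasSquare P := by
  obtain ⟨cX, hcX⟩ : ∃ c, (q < p ∧ c = n + q) ∨ (p ≤ q ∧ c = q + wsh₂) := by
    by_cases hqp : q < p
    · exact ⟨n + q, Or.inl ⟨hqp, rfl⟩⟩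
    · exact ⟨q + wsh₂, Or.inr ⟨not_lt.mp hqp, rfl⟩⟩
  rcases le_total (n + p) cX with hor | hor
  · refine hasSquare_abstract' P x n L (n + p) cX (m - n) (m - wsh₂) (xsh₂ - wsh₂)
      hor (by omega) (by omega) (by omega) (by omega) ?_
    intro j hj1 hj2 hne1 hne2
    refine ⟨fun hlt => ?_, fun hgt hlt => ?_, fun hgt => ?_⟩
    · have e1 := hw1 j (by omega) (by omega)
      have e2 := hx1 (j - n) (by omega)
      constructor
      · rw [show j + (m - n) = m + (j - n) by omega, e2]; exact e1.symm
      · omega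
    · have e1 := hw2 j (by omega) (by omega)
      have e2 := hx1 (j - wsh₂) (by omega)
      constructor
      · rw [show j + (m - wsh₂) = m + (j - wsh₂) by omega, e2]; exact e1.symm
      · omega
    · have e1 := hw2 j (by omega) (by omega)
      have e2 := hx2 (j - wsh₂) (by omega) (by omega)
      constructor
      · rw [show j + (xsh₂ - wsh₂) = xsh₂ + (j - wsh₂) by omega, e2]; exact e1.symm
      · omega
  · refine hasSquare_abstract' P x n L cX (n + p) (m - n) (xsh₂ - n) (xsh₂ - wsh₂)
      hor (by omega) (by omega) (by omega) (by omega) ?_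
    intro j hj1 hj2 hne1 hne2
    refine ⟨fun hlt => ?_, fun hgt hlt => ?_, fun hgt => ?_⟩
    · have e1 := hw1 j (by omega) (by omega)
      have e2 := hx1 (j - n) (by omega)
      constructor
      · rw [show j + (m - n) = m + (j - n) by omega, e2]; exact e1.symm
      · omega
    · have e1 := hw1 j (by omega) (by omega)
      have e2 := hx2 (j - n) (by omega) (by omega)
      constructor
      · rw [show j + (xsh₂ - n) = xsh₂ + (j - n) by omega, e2]; exact e1.symm
      · omega
    · have e1 := hw2 j (by omega) (by omega)
      have e2 := hx2 (j - wsh₂) (by omega) (by omega)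
      constructor
      · rw [show j + (xsh₂ - wsh₂) = xsh₂ + (j - wsh₂) by omega, e2]; exact e1.symm
      · omega

end Aux

theorem stmt15 {A : Type*} (Q : List A) (hQ : SquareFree Q)
    (W W' X X' V : List A) (hWW : AlmostSq W W') (hXX : AlmostSq X X')
    (hsame : X ++ X' = W ++ W' ++ V) (hinf : X ++ X' <:+: Q)
    (hdiff : (W ++ W').length + 4 ≤ (X ++ X').length) :
    ((X ++ X').length : ℚ) > 5 / 4 * ((W ++ W').length : ℚ) := by
  by_contra hcon
  push_neg at hcon
  have hcontra : 4 * (X ++ X').length ≤ 5 * (W ++ W').length := by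
    have h4 : (4 : ℚ) * ((X ++ X').length : ℚ) ≤ 5 * ((W ++ W').length : ℚ) := by linarith
    exact_mod_cast h4
  have hx0 : (X ++ X') ≠ [] := by
    intro h; rw [h] at hdiff; simp at hdiff
  obtain ⟨x⟩ : Nonempty A := ⟨(X ++ X').head hx0⟩
  have ha : (W ++ W').length = W.length + W'.length := List.length_append
  have ha' : (X ++ X').length = X.length + X'.length := List.length_append
  have key : HasSquare (X ++ X') := by
    rcases hWW with ⟨W₁, W₂, y, hW, hW'⟩ | ⟨W₁, W₂, y, hW', hW⟩
    · -- case WA : |W'| = |W| + 1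
      obtain ⟨R1w, R2w⟩ := rel_ins (X ++ X') W₁ W₂ V y x
        (by rw [hsame, hW, hW']; simp [List.append_assoc])
      have hnW : W.length = W₁.length + W₂.length := by rw [hW]; simp; try omega
      have hW'l : W'.length = W₁.length + W₂.length + 1 := by rw [hW']; simp; try omega
      have hw1 : ∀ j, W.length ≤ j → j < W.length + W₁.length →
          (X ++ X').getD j x = (X ++ X').getD (j - W.length) x := by
        intro j hj1 hj2
        have := R1w (j - W.length) (by omega)
        rwa [show W₁.length + W₂.length + (j - W.length) = j by omega] at this
      have hw2 : ∀ j, W.length + W₁.length < j → j < W.length + (W.length + 1) →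
          (X ++ X').getD j x = (X ++ X').getD (j - (W.length + 1)) x := by
        intro j hj1 hj2
        have := R2w (j - (W.length + 1)) (by omega) (by omega)
        rwa [show W₁.length + W₂.length + 1 + (j - (W.length + 1)) = j by omega] at this
      rcases hXX with ⟨X₁, X₂, z, hX, hX'⟩ | ⟨X₁, X₂, z, hX', hX⟩
      · -- XA
        obtain ⟨R1x, R2x⟩ := rel_ins (X ++ X') X₁ X₂ [] z x (by rw [hX, hX']; simp)
        have hmX : X.length = X₁.length + X₂.length := by rw [hX]; simp; try omega
        have hX'l : X'.length = X₁.length + X₂.length + 1 := by rw [hX']; simp; try omega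
        refine engine (X ++ X') x W.length X.length W₁.length X₁.length
          (W.length + 1) (W.length + 1) (X.length + 1)
          (by omega) (by omega) (by omega) (by omega) (by omega) (by omega) (by omega)
          (by omega) (by omega) (by omega) (by omega) (by omega) (by omega) (by omega)
          ?_ ?_ hw1 hw2
        · intro i hi
          have := R1x i hi
          rwa [show X₁.length + X₂.length + i = X.length + i by omega] at this
        · intro i hi1 hi2
          have := R2x i (by omega) (by omega)
          rwa [show X₁.length + X₂.length + 1 + i = X.length + 1 + i by omega] at this
      · -- XB
        obtain ⟨R1x, R2x⟩ := rel_del (X ++ X') X₁ X₂ [] z x (by rw [hX, hX']; simp)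
        have hmX : X.length = X₁.length + 1 + X₂.length := by rw [hX]; simp; omega
        have hX'l : X'.length = X₁.length + X₂.length := by rw [hX']; simp; try omega
        refine engine (X ++ X') x W.length X.length W₁.length X₁.length
          (W.length + 1) (W.length + 1) (X.length - 1)
          (by omega) (by omega) (by omega) (by omega) (by omega) (by omega) (by omega)
          (by omega) (by omega) (by omega) (by omega) (by omega) (by omega) (by omega)
          ?_ ?_ hw1 hw2
        · intro i hi
          have := R1x i hi
          rwa [show X₁.length + 1 + X₂.length + i = X.length + i by omega] at this
        · intro i hi1 hi2
          have := R2x i (by omega) (by omega)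
          rwa [show X₁.length + X₂.length + i = X.length - 1 + i by omega] at this
    · -- case WB : |W| = |W'| + 1
      obtain ⟨R1w, R2w⟩ := rel_del (X ++ X') W₁ W₂ V y x
        (by rw [hsame, hW, hW']; simp [List.append_assoc])
      have hnW : W.length = W₁.length + 1 + W₂.length := by rw [hW]; simp; omega
      have hW'l : W'.length = W₁.length + W₂.length := by rw [hW']; simp; try omega
      have hw1 : ∀ j, W.length ≤ j → j < W.length + W₁.length →
          (X ++ X').getD j x = (X ++ X').getD (j - W.length) x := by
        intro j hj1 hj2
        have := R1w (j - W.length) (by omega)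
        rwa [show W₁.length + 1 + W₂.length + (j - W.length) = j by omega] at this
      have hw2 : ∀ j, W.length + W₁.length < j → j < W.length + (W.length - 1) →
          (X ++ X').getD j x = (X ++ X').getD (j - (W.length - 1)) x := by
        intro j hj1 hj2
        have := R2w (j - (W.length - 1)) (by omega) (by omega)
        rwa [show W₁.length + W₂.length + (j - (W.length - 1)) = j by omega] at this
      rcases hXX with ⟨X₁, X₂, z, hX, hX'⟩ | ⟨X₁, X₂, z, hX', hX⟩
      · -- XA
        obtain ⟨R1x, R2x⟩ := rel_ins (X ++ X') X₁ X₂ [] z x (by rw [hX, hX']; simp)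
        have hmX : X.length = X₁.length + X₂.length := by rw [hX]; simp; try omega
        have hX'l : X'.length = X₁.length + X₂.length + 1 := by rw [hX']; simp; try omega
        refine engine (X ++ X') x W.length X.length W₁.length X₁.length
          (W.length - 1) (W.length - 1) (X.length + 1)
          (by omega) (by omega) (by omega) (by omega) (by omega) (by omega) (by omega)
          (by omega) (by omega) (by omega) (by omega) (by omega) (by omega) (by omega)
          ?_ ?_ hw1 hw2
        · intro i hi
          have := R1x i hi
          rwa [show X₁.length + X₂.length + i = X.length + i by omega] at this
        · intro i hi1 hi2
          have := R2x i (by omega) (by omega)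
          rwa [show X₁.length + X₂.length + 1 + i = X.length + 1 + i by omega] at this
      · -- XB
        obtain ⟨R1x, R2x⟩ := rel_del (X ++ X') X₁ X₂ [] z x (by rw [hX, hX']; simp)
        have hmX : X.length = X₁.length + 1 + X₂.length := by rw [hX]; simp; omega
        have hX'l : X'.length = X₁.length + X₂.length := by rw [hX']; simp; try omega
        refine engine (X ++ X') x W.length X.length W₁.length X₁.length
          (W.length - 1) (W.length - 1) (X.length - 1)
          (by omega) (by omega) (by omega) (by omega) (by omega) (by omega) (by omega)
          (by omega) (by omega) (by omega) (by omega) (by omega) (by omega) (by omega)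
          ?_ ?_ hw1 hw2
        · intro i hi
          have := R1x i hi
          rwa [show X₁.length + 1 + X₂.length + i = X.length + i by omega] at this
        · intro i hi1 hi2
          have := R2x i (by omega) (by omega)
          rwa [show X₁.length + X₂.length + i = X.length - 1 + i by omega] at this
  obtain ⟨T, hT, hTinf⟩ := key
  exact hQ ⟨T, hT, hTinf.trans hinf⟩
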